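/- Let ξ : {1/2,3/2,...,N-1/2} → {-1,0,1,2}, and let S(x) = #{0≤y<x : ξ(y+1/2)=-1} - #{0≤y<x : ξ(y+1/2)=1} with running minimum m = min_{0≤y<N} S(y). Then any ξ-matching M on [0,N] satisfies 2|M| ≤ C(N) - (2|m| + S(N)), where C(N) is the total number of edges e with ξ(e) ∈ {-1,1}. -/

import Mathlib

/-- A `ξ`-matching on the interval `[0,N]`: a set of ordered pairs `(e, e')` of edges
(edge `y + 1/2` is indexed by `y ∈ {0, …, N-1}`) with `e < e'`, `ξ e = -1`, `ξ e' = 1`,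
no two pairs sharing an edge. -/
def IsXiMatching (ξ : ℕ → ℤ) (N : ℕ) (M : Finset (ℕ × ℕ)) : Prop :=
  (∀ p ∈ M, p.1 < p.2 ∧ p.2 < N ∧ ξ p.1 = -1 ∧ ξ p.2 = 1) ∧
  (∀ p ∈ M, ∀ q ∈ M, p ≠ q →
    p.1 ≠ q.1 ∧ p.1 ≠ q.2 ∧ p.2 ≠ q.1 ∧ p.2 ≠ q.2)

lemma matching_core (ξ : ℕ → ℤ) (N x : ℕ) (hx : x ≤ N) (M : Finset (ℕ × ℕ))
    (hM : IsXiMatching ξ N M) :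
    M.card ≤ ((Finset.range x).filter (fun y => ξ y = -1)).card
      + ((Finset.Ico x N).filter (fun y => ξ y = 1)).card := by
  obtain ⟨h1, h2⟩ := hM
  have hsplit : (M.filter (fun p => p.2 < x)).card
      + (M.filter (fun p => ¬ p.2 < x)).card = M.card :=
    Finset.card_filter_add_card_filter_not _
  have c1 : (M.filter (fun p => p.2 < x)).card
      ≤ ((Finset.range x).filter (fun y => ξ y = -1)).card := by
    apply Finset.card_le_card_of_injOn (fun p => p.1)
    · intro p hp
      simp only [Finset.mem_coe, Finset.mem_filter, Finset.mem_range] at hp ⊢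
      obtain ⟨hpM, hpx⟩ := hp
      obtain ⟨hlt, _, hξ1, _⟩ := h1 p hpM
      exact ⟨hlt.trans hpx, hξ1⟩
    · intro p hp q hq hpq
      simp only [Finset.coe_filter, Set.mem_setOf_eq] at hp hq
      by_contra hne
      exact (h2 p hp.1 q hq.1 hne).1 hpq
  have c2 : (M.filter (fun p => ¬ p.2 < x)).card
      ≤ ((Finset.Ico x N).filter (fun y => ξ y = 1)).card := by
    apply Finset.card_le_card_of_injOn (fun p => p.2)
    · intro p hp
      simp only [Finset.mem_coe, Finset.mem_filter, Finset.mem_Ico] at hp ⊢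
      obtain ⟨hpM, hpx⟩ := hp
      obtain ⟨_, hpN, _, hξ⟩ := h1 p hpM
      exact ⟨⟨Nat.le_of_not_lt hpx, hpN⟩, hξ⟩
    · intro p hp q hq hpq
      simp only [Finset.coe_filter, Set.mem_setOf_eq] at hp hq
      by_contra hne
      exact (h2 p hp.1 q hq.1 hne).2.2.2 hpq
  omega

lemma filter_range_split (P : ℕ → Prop) [DecidablePred P] {x N : ℕ} (hx : x ≤ N) :
    ((Finset.range N).filter P).card
      = ((Finset.range x).filter P).card + ((Finset.Ico x N).filter P).card := by
  rw [Finset.range_eq_Ico, ← Finset.Ico_union_Ico_eq_Ico (Nat.zero_le x) hx,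
    Finset.filter_union, Finset.card_union_of_disjoint, ← Finset.range_eq_Ico]
  exact Finset.disjoint_filter_filter (Finset.Ico_disjoint_Ico_consecutive 0 x N)

/-- Any `ξ`-matching `M` on `[0,N]` satisfies
`2|M| ≤ C(N) - (2|m| + S(N))`. -/
theorem matching_card_le (N : ℕ) (hN : 0 < N) (ξ : ℕ → ℤ)
    (hval : ∀ y < N, ξ y ∈ ({-1, 0, 1, 2} : Set ℤ))
    (M : Finset (ℕ × ℕ)) (hM : IsXiMatching ξ N M) :
    (2 * M.card : ℤ) ≤
      (((Finset.range N).filter (fun y => ξ y = -1)).card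
        + ((Finset.range N).filter (fun y => ξ y = 1)).card : ℤ)
      - (2 * |(((Finset.range N).image (fun x : ℕ =>
            ((((Finset.range x).filter (fun y => ξ y = -1)).card : ℤ)
              - ((Finset.range x).filter (fun y => ξ y = 1)).card))).min'
            (by simpa using Finset.nonempty_range_iff.2 hN.ne'))|
          + ((((Finset.range N).filter (fun y => ξ y = -1)).card : ℤ)
            - ((Finset.range N).filter (fun y => ξ y = 1)).card)) := by
  set S : ℕ → ℤ := fun x =>
    ((((Finset.range x).filter (fun y => ξ y = -1)).card : ℤ)
      - ((Finset.range x).filter (fun y => ξ y = 1)).card) with hS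
  set T := ((Finset.range N).image S) with hT
  have hTne : T.Nonempty := by simpa [hT] using Finset.nonempty_range_iff.2 hN.ne'
  have hmmem : T.min' hTne ∈ T := Finset.min'_mem _ _
  obtain ⟨x₀, hx₀N, hx₀⟩ := Finset.mem_image.1 hmmem
  have hx₀N' : x₀ ≤ N := (Finset.mem_range.1 hx₀N).le
  have hm0 : T.min' hTne ≤ 0 := by
    have : S 0 ∈ T := Finset.mem_image_of_mem S (Finset.mem_range.2 hN)
    have := Finset.min'_le T (S 0) this
    simpa [hS] using this
  have habs : |T.min' hTne| = -(T.min' hTne) := abs_of_nonpos hm0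
  have hcore := matching_core ξ N x₀ hx₀N' M hM
  have hsplitA := filter_range_split (fun y => ξ y = -1) hx₀N'
  have hsplitB := filter_range_split (fun y => ξ y = 1) hx₀N'
  rw [habs, ← hx₀]
  simp only [hS]
  omega
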